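/- arXiv:1304.7377 — 2 statements merged into one kernel-verified Lean document; each statement's English description precedes it below -/
import Mathlib

section
/- For α∈(0,1], the reflected functions f̄_α(x)=1−|x|^α lie in H^{1/2}(−1,1), and ‖f̄_α‖_{H^{1/2}(−1,1)}→0 as α→0⁺; in particular the Gagliardo seminorm ∫_{−1}^{1}∫_{−1}^{1} (f̄_α(x)−f̄_α(y))²/(x−y)² dx dy tends to 0 as α→0⁺. -/
open MeasureTheory Set Filter Topology
open scoped ENNReal NNReal

noncomputable section

/-- The reflected function f̄_α(x) = 1 - |x|^α on (-1,1). -/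
def fbar (α : ℝ) (x : ℝ) : ℝ := 1 - |x| ^ α

/-- Gagliardo H^{1/2}(-1,1) seminorm squared of f̄_α. -/
def Qbar (α : ℝ) : ℝ :=
  ∫ x in Ioo (-1:ℝ) 1, ∫ y in Ioo (-1:ℝ) 1, (fbar α x - fbar α y) ^ 2 / (x - y) ^ 2

/-- Squared L²(-1,1) norm of f̄_α. -/
def L2sqBar (α : ℝ) : ℝ := ∫ x in Ioo (-1:ℝ) 1, (fbar α x) ^ 2

/-- H^{1/2}(-1,1) norm of f̄_α. -/
def HhalfBar (α : ℝ) : ℝ := Real.sqrt (L2sqBar α + Qbar α)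

section AuxProof
open intervalIntegral

lemma log_le_four_rpow {u : ℝ} (hu : 1 ≤ u) : Real.log u ≤ 4 * u ^ ((1:ℝ)/4) := by
  have hu0 : (0:ℝ) < u := by linarith
  have h1 : Real.log u = 4 * Real.log (u ^ ((1:ℝ)/4)) := by
    rw [Real.log_rpow hu0]; ring
  have h2 : Real.log (u ^ ((1:ℝ)/4)) ≤ u ^ ((1:ℝ)/4) - 1 :=
    Real.log_le_sub_one_of_pos (Real.rpow_pos_of_pos hu0 _)
  nlinarith [Real.rpow_nonneg hu0.le ((1:ℝ)/4)]

lemma rpow_sub_one_le_log {u α : ℝ} (hu : 1 ≤ u) (hα : 0 < α) :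
    u ^ α - 1 ≤ α * u ^ α * Real.log u := by
  have hu0 : (0:ℝ) < u := by linarith
  have h1 : u ^ (-α) = Real.exp (-(α * Real.log u)) := by
    rw [Real.rpow_def_of_pos hu0]; ring_nf
  have h2 : 1 - α * Real.log u ≤ u ^ (-α) := by
    rw [h1]; linarith [Real.add_one_le_exp (-(α * Real.log u))]
  have h3 : u ^ α * u ^ (-α) = 1 := by
    rw [← Real.rpow_add hu0]; simp
  have h4 : (0:ℝ) < u ^ α := Real.rpow_pos_of_pos hu0 _
  nlinarith

lemma bernoulli_rpow {u α : ℝ} (hu : 0 ≤ u) (h0 : 0 ≤ α) (h1 : α ≤ 1) :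
    u ^ α ≤ 1 + α * (u - 1) := by
  have := Real.geom_mean_le_arith_mean2_weighted h0 (by linarith : (0:ℝ) ≤ 1 - α)
    hu zero_le_one (by ring)
  rw [Real.one_rpow] at this
  nlinarith [this]


/-- In the near-diagonal regime we have the MVT-type bound. -/
lemma mvt_bound {a b α : ℝ} (hb : 0 < b) (hba : b ≤ a) (h0 : 0 < α) (h1 : α ≤ 1) :
    a ^ α - b ^ α ≤ α * (a - b) * b ^ (α - 1) := by
  have ha : 0 < a := lt_of_lt_of_le hb hba
  have h := bernoulli_rpow (u := a/b) (α := α) (by positivity) h0.le h1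
  have hbα : (0:ℝ) < b ^ α := Real.rpow_pos_of_pos hb _
  have h2 : a ^ α ≤ b ^ α * (1 + α * (a/b - 1)) := by
    calc a ^ α = b ^ α * ((a/b) ^ α) := by
          rw [Real.div_rpow ha.le hb.le]; field_simp
      _ ≤ b ^ α * (1 + α * (a/b - 1)) := mul_le_mul_of_nonneg_left h hbα.le
  have h3 : b ^ α * (a / b - 1) = (a - b) * b ^ (α - 1) := by
    rw [Real.rpow_sub_one hb.ne']; field_simp
  nlinarith [h2, h3]

/-- Powers comparison: for `0 < b ≤ a ≤ 2b` and any `e`, `b^(α-3/4) ≤ 2 * a^(α-3/4)`. -/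
lemma base_swap {a b α : ℝ} (hb : 0 < b) (hba : b ≤ a) (hc : a ≤ 2*b) (h0 : 0 < α) (h1 : α ≤ 1) :
    b ^ (α - 3/4) ≤ 2 * a ^ (α - 3/4) := by
  have ha : 0 < a := lt_of_lt_of_le hb hba
  have e0 : b ^ (α - 3/4) = b ^ α * b ^ (-(3/4):ℝ) := by
    rw [← Real.rpow_add hb]; congr 1 <;> ring
  have e0' : a ^ (α - 3/4) = a ^ α * a ^ (-(3/4):ℝ) := by
    rw [← Real.rpow_add ha]; congr 1 <;> ring
  have e1 : b ^ α ≤ a ^ α := Real.rpow_le_rpow hb.le hba h0.le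
  have e2 : (2*b) ^ (-(3/4):ℝ) ≤ a ^ (-(3/4):ℝ) :=
    Real.rpow_le_rpow_of_nonpos ha hc (by norm_num)
  have e3 : (2*b) ^ (-(3/4):ℝ) = 2 ^ (-(3/4):ℝ) * b ^ (-(3/4):ℝ) :=
    Real.mul_rpow (by norm_num) hb.le
  have e4 : (1/2 : ℝ) ≤ 2 ^ (-(3/4):ℝ) := by
    rw [Real.rpow_neg (by norm_num)]
    rw [show (1/2:ℝ) = (2:ℝ)⁻¹ by norm_num]
    have : (2:ℝ) ^ ((3:ℝ)/4) ≤ 2 ^ (1:ℝ) := by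
      apply Real.rpow_le_rpow_of_exponent_le (by norm_num) (by norm_num)
    rw [Real.rpow_one] at this
    exact inv_anti₀ (by positivity) this
  have hb34 : (0:ℝ) < b ^ (-(3/4):ℝ) := Real.rpow_pos_of_pos hb _
  have haα : (0:ℝ) < a ^ α := Real.rpow_pos_of_pos ha _
  have e5 : b ^ (-(3/4):ℝ) ≤ 2 * a ^ (-(3/4):ℝ) := by nlinarith [e2, e3, e4]
  rw [e0, e0']
  have hbα : (0:ℝ) ≤ b ^ α := (Real.rpow_pos_of_pos hb _).le
  calc b ^ α * b ^ (-(3/4):ℝ) ≤ a ^ α * (2 * a ^ (-(3/4):ℝ)) := by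
        apply mul_le_mul e1 e5 hb34.le haα.le
    _ = 2 * (a ^ α * a ^ (-(3/4):ℝ)) := by ring

lemma key_main {a b α : ℝ} (hb : 0 < b) (hba : b ≤ a) (h0 : 0 < α) (h1 : α ≤ 1) :
    a ^ α - b ^ α ≤ 8 * α * (a - b) * (a ^ (α - 3/4) * b ^ (-(1/4):ℝ)) := by
  have ha : 0 < a := lt_of_lt_of_le hb hba
  have hA : (0:ℝ) < a ^ (α - 3/4) := Real.rpow_pos_of_pos ha _
  have hB : (0:ℝ) < b ^ (-(1/4):ℝ) := Real.rpow_pos_of_pos hb _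
  rcases le_or_gt a (2*b) with hc | hc
  · have hbe := mvt_bound hb hba h0 h1
    have e1 : b ^ (α - 1) = b ^ (α - 3/4) * b ^ (-(1/4):ℝ) := by
      rw [← Real.rpow_add hb]; congr 1 <;> ring
    have e2 := base_swap hb hba hc h0 h1
    have hab : (0:ℝ) ≤ a - b := by linarith
    calc a ^ α - b ^ α ≤ α * (a - b) * b ^ (α - 1) := hbe
      _ = α * (a - b) * (b ^ (α - 3/4) * b ^ (-(1/4):ℝ)) := by rw [e1]
      _ ≤ α * (a - b) * ((2 * a ^ (α - 3/4)) * b ^ (-(1/4):ℝ)) := by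
          apply mul_le_mul_of_nonneg_left _ (by positivity)
          exact mul_le_mul_of_nonneg_right e2 hB.le
      _ ≤ 8 * α * (a - b) * (a ^ (α - 3/4) * b ^ (-(1/4):ℝ)) := by
          have hP : (0:ℝ) ≤ α * (a - b) * (a ^ (α - 3/4) * b ^ (-(1/4):ℝ)) := by positivity
          nlinarith [hP]
  · -- far regime : log bound
    have hu1 : (1:ℝ) ≤ a / b := (one_le_div hb).2 hba
    have hlog := rpow_sub_one_le_log hu1 h0
    have hl4 := log_le_four_rpow hu1
    have huα : (0:ℝ) < (a/b) ^ α := Real.rpow_pos_of_pos (by positivity) _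
    have h5 : (a/b) ^ α - 1 ≤ 4 * α * ((a/b) ^ α * (a/b) ^ ((1:ℝ)/4)) := by
      have := mul_le_mul_of_nonneg_left hl4 (by positivity : (0:ℝ) ≤ α * (a/b) ^ α)
      nlinarith [hlog, this]
    have hbα : (0:ℝ) < b ^ α := Real.rpow_pos_of_pos hb _
    have hsplit : ∀ e : ℝ, (a/b) ^ e = a ^ e * b ^ (-e) := by
      intro e
      rw [Real.div_rpow ha.le hb.le, Real.rpow_neg hb.le, div_eq_mul_inv]
    have h6 : a ^ α - b ^ α ≤ 4 * α * (a ^ α * (a ^ ((1:ℝ)/4) * b ^ (-(1/4):ℝ))) := by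
      have h7 : b ^ α * ((a/b) ^ α - 1) = a ^ α - b ^ α := by
        rw [hsplit α, Real.rpow_neg hb.le]
        field_simp
      have h8 := mul_le_mul_of_nonneg_left h5 hbα.le
      rw [h7] at h8
      calc a ^ α - b ^ α ≤ b ^ α * (4 * α * ((a/b) ^ α * (a/b) ^ ((1:ℝ)/4))) := h8
        _ = 4 * α * (a ^ α * (a ^ ((1:ℝ)/4) * b ^ (-(1/4):ℝ))) := by
            rw [hsplit α, hsplit ((1:ℝ)/4), Real.rpow_neg hb.le, Real.rpow_neg hb.le]
            have : (4:ℝ)⁻¹ = (1:ℝ)/4 := by norm_num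
            field_simp
    have h9 : a ^ α * a ^ ((1:ℝ)/4) = a ^ (α - 3/4) * a := by
      rw [← Real.rpow_add ha, ← Real.rpow_add_one ha.ne' (α - 3/4)]
      congr 1 <;> ring
    have h10 : a ≤ 2 * (a - b) := by linarith
    calc a ^ α - b ^ α ≤ 4 * α * (a ^ α * (a ^ ((1:ℝ)/4) * b ^ (-(1/4):ℝ))) := h6
      _ = 4 * α * (a ^ (α - 3/4) * b ^ (-(1/4):ℝ)) * a := by rw [← mul_assoc (a ^ α), h9]; ring
      _ ≤ 4 * α * (a ^ (α - 3/4) * b ^ (-(1/4):ℝ)) * (2 * (a - b)) := by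
          apply mul_le_mul_of_nonneg_left h10 (by positivity)
      _ = 8 * α * (a - b) * (a ^ (α - 3/4) * b ^ (-(1/4):ℝ)) := by ring

lemma key_int {a b α : ℝ} (hb : 0 < b) (hba : b ≤ a) (h0 : 0 < α) (h1 : α ≤ 1) :
    a ^ α - b ^ α ≤ 2 * (a - b) * (a ^ ((α-1)/2) * b ^ ((α-1)/2)) := by
  have ha : 0 < a := lt_of_lt_of_le hb hba
  have hA : (0:ℝ) < a ^ ((α-1)/2) := Real.rpow_pos_of_pos ha _
  have hB : (0:ℝ) < b ^ ((α-1)/2) := Real.rpow_pos_of_pos hb _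
  have hab : (0:ℝ) ≤ a - b := by linarith
  rcases le_or_gt a (2*b) with hc | hc
  · have hbe := mvt_bound hb hba h0 h1
    have e1 : b ^ (α - 1) = b ^ ((α-1)/2) * b ^ ((α-1)/2) := by
      rw [← Real.rpow_add hb]; ring_nf
    have e2 : b ^ ((α-1)/2) ≤ 2 * a ^ ((α-1)/2) := by
      have he : (α-1)/2 ≤ 0 := by linarith
      have ee2 : (2*b) ^ ((α-1)/2) ≤ a ^ ((α-1)/2) :=
        Real.rpow_le_rpow_of_nonpos ha hc he
      have ee3 : (2*b) ^ ((α-1)/2) = 2 ^ ((α-1)/2) * b ^ ((α-1)/2) :=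
        Real.mul_rpow (by norm_num) hb.le
      have ee4 : (1/2:ℝ) ≤ 2 ^ ((α-1)/2) := by
        have h2 : (2:ℝ) ^ (-(1:ℝ)) ≤ 2 ^ ((α-1)/2) :=
          Real.rpow_le_rpow_of_exponent_le (by norm_num) (by linarith)
        have : (2:ℝ) ^ (-(1:ℝ)) = 1/2 := by
          rw [Real.rpow_neg (by norm_num), Real.rpow_one]; norm_num
        linarith [this ▸ h2]
      nlinarith [ee2, ee3, ee4, hB]
    calc a ^ α - b ^ α ≤ α * (a - b) * b ^ (α - 1) := hbe
      _ ≤ 1 * (a - b) * b ^ (α - 1) := by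
          apply mul_le_mul_of_nonneg_right _ (Real.rpow_pos_of_pos hb _).le
          nlinarith [hab]
      _ = (a - b) * (b ^ ((α-1)/2) * b ^ ((α-1)/2)) := by rw [e1]; ring
      _ ≤ (a - b) * ((2 * a ^ ((α-1)/2)) * b ^ ((α-1)/2)) := by
          apply mul_le_mul_of_nonneg_left _ hab
          exact mul_le_mul_of_nonneg_right e2 hB.le
      _ = 2 * (a - b) * (a ^ ((α-1)/2) * b ^ ((α-1)/2)) := by ring
  · have e1 : a ^ ((α-1)/2) ≤ b ^ ((α-1)/2) :=
      Real.rpow_le_rpow_of_nonpos hb hba (by linarith)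
    have e2 : a ^ α = a * (a ^ ((α-1)/2) * a ^ ((α-1)/2)) := by
      have ee : a ^ ((α-1)/2) * a ^ ((α-1)/2) = a ^ (α - 1) := by
        rw [← Real.rpow_add ha]; congr 1 <;> ring
      rw [ee, Real.rpow_sub_one ha.ne']
      field_simp
    have h10 : a ≤ 2 * (a - b) := by linarith
    have hbα : (0:ℝ) ≤ b ^ α := (Real.rpow_pos_of_pos hb _).le
    calc a ^ α - b ^ α ≤ a ^ α := by linarith
      _ = a * (a ^ ((α-1)/2) * a ^ ((α-1)/2)) := e2
      _ ≤ (2 * (a - b)) * (a ^ ((α-1)/2) * b ^ ((α-1)/2)) := by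
          have : a ^ ((α-1)/2) * a ^ ((α-1)/2) ≤ a ^ ((α-1)/2) * b ^ ((α-1)/2) :=
            mul_le_mul_of_nonneg_left e1 hA.le
          nlinarith [hA, hB, this, ha, h10]
      _ = 2 * (a - b) * (a ^ ((α-1)/2) * b ^ ((α-1)/2)) := by ring

lemma div_bound {N d c : ℝ} (hN : 0 ≤ N) (hd : 0 ≤ d) (hc : 0 ≤ c) (h : N ≤ c * d) :
    N / d ≤ c := by
  rcases eq_or_lt_of_le hd with h0 | h0
  · rw [← h0, div_zero]; exact hc
  · rw [div_le_iff₀ h0]; exact h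

lemma fbar_sub (α x y : ℝ) : fbar α x - fbar α y = |y| ^ α - |x| ^ α := by
  simp only [fbar]; ring

lemma sq_rpow {a : ℝ} (ha : 0 ≤ a) (e : ℝ) : (a ^ e) ^ 2 = a ^ (2 * e) := by
  rw [← Real.rpow_natCast (a ^ e) 2, ← Real.rpow_mul ha]
  norm_num; congr 1; ring

lemma abs_sub_sq_le (x y : ℝ) : (|x| - |y|) ^ 2 ≤ (x - y) ^ 2 := by
  have h1 : |x| - |y| ≤ |x - y| := abs_sub_abs_le_abs_sub x y
  have h2 : -(|x - y|) ≤ |x| - |y| := by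
    have := abs_sub_abs_le_abs_sub y x
    rw [abs_sub_comm] at this; linarith
  calc (|x| - |y|) ^ 2 ≤ |x - y| ^ 2 := sq_le_sq' h2 h1
    _ = (x - y) ^ 2 := sq_abs _

/-- ordered version of global product bound -/
lemma F_le_prod_aux {α x y : ℝ} (hy : y ≠ 0) (hyx : |y| ≤ |x|)
    (h0 : 0 < α) (h1 : α ≤ 1) :
    (fbar α x - fbar α y) ^ 2 / (x - y) ^ 2 ≤ 4 * (|x| ^ (α - 1) * |y| ^ (α - 1)) := by
  set a := |x| with ha_def
  set b := |y| with hb_def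
  have hb : 0 < b := abs_pos.2 hy
  have ha : 0 < a := lt_of_lt_of_le hb hyx
  have hdiff : (fbar α x - fbar α y) ^ 2 = (a ^ α - b ^ α) ^ 2 := by
    rw [fbar_sub]; ring
  have hnn : 0 ≤ a ^ α - b ^ α := sub_nonneg.2 (Real.rpow_le_rpow hb.le hyx h0.le)
  have hkey := key_int hb hyx h0 h1
  have hsq : (a ^ α - b ^ α) ^ 2 ≤ 4 * (a - b) ^ 2 * ((a ^ ((α-1)/2)) ^ 2 * (b ^ ((α-1)/2)) ^ 2) := by
    nlinarith [hkey, hnn, sq_nonneg (a - b), Real.rpow_pos_of_pos ha ((α-1)/2),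
      Real.rpow_pos_of_pos hb ((α-1)/2), sq_nonneg (a ^ ((α-1)/2) * b ^ ((α-1)/2))]
  rw [hdiff]
  apply div_bound (by positivity) (by positivity) (by positivity)
  have e1 : (a ^ ((α-1)/2)) ^ 2 = a ^ (α - 1) := by rw [sq_rpow ha.le]; congr 1; ring
  have e2 : (b ^ ((α-1)/2)) ^ 2 = b ^ (α - 1) := by rw [sq_rpow hb.le]; congr 1; ring
  have e3 : (a - b) ^ 2 ≤ (x - y) ^ 2 := abs_sub_sq_le x y
  have hp : (0:ℝ) ≤ a ^ (α-1) * b ^ (α-1) := by positivity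
  calc (a ^ α - b ^ α) ^ 2 ≤ 4 * (a - b) ^ 2 * (a ^ (α-1) * b ^ (α-1)) := by
        rw [← e1, ← e2]; exact hsq
    _ ≤ 4 * (x - y) ^ 2 * (a ^ (α-1) * b ^ (α-1)) := by nlinarith [e3, hp]
    _ = 4 * (a ^ (α-1) * b ^ (α-1)) * (x - y) ^ 2 := by ring

lemma F_le_prod {α x y : ℝ} (hx : x ≠ 0) (hy : y ≠ 0) (h0 : 0 < α) (h1 : α ≤ 1) :
    (fbar α x - fbar α y) ^ 2 / (x - y) ^ 2 ≤ 4 * (|x| ^ (α - 1) * |y| ^ (α - 1)) := by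
  rcases le_total |y| |x| with h | h
  · exact F_le_prod_aux hy h h0 h1
  · have := F_le_prod_aux hx h h0 h1
    have e1 : (fbar α y - fbar α x) ^ 2 = (fbar α x - fbar α y) ^ 2 := by ring
    have e2 : (y - x) ^ 2 = (x - y) ^ 2 := by ring
    rw [e1, e2] at this
    calc (fbar α x - fbar α y) ^ 2 / (x - y) ^ 2 ≤ 4 * (|y| ^ (α-1) * |x| ^ (α-1)) := this
      _ = 4 * (|x| ^ (α-1) * |y| ^ (α-1)) := by ring

/-- ordered main bound -/
lemma F_le_main {α x y : ℝ} (hy : y ≠ 0) (hyx : |y| ≤ |x|) (h0 : 0 < α) (h1 : α ≤ 1) :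
    (fbar α x - fbar α y) ^ 2 / (x - y) ^ 2
      ≤ 64 * α ^ 2 * (|x| ^ (2*α - 3/2) * |y| ^ (-(1/2):ℝ)) := by
  set a := |x|
  set b := |y|
  have hb : 0 < b := abs_pos.2 hy
  have ha : 0 < a := lt_of_lt_of_le hb hyx
  have hdiff : (fbar α x - fbar α y) ^ 2 = (a ^ α - b ^ α) ^ 2 := by rw [fbar_sub]; ring
  have hnn : 0 ≤ a ^ α - b ^ α := sub_nonneg.2 (Real.rpow_le_rpow hb.le hyx h0.le)
  have hkey := key_main hb hyx h0 h1
  have hsq : (a ^ α - b ^ α) ^ 2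
      ≤ 64 * α^2 * (a - b) ^ 2 * ((a ^ (α - 3/4)) ^ 2 * (b ^ (-(1/4):ℝ)) ^ 2) := by
    nlinarith [hkey, hnn, sq_nonneg (a - b), Real.rpow_pos_of_pos ha (α - 3/4),
      Real.rpow_pos_of_pos hb (-(1/4):ℝ), h0,
      sq_nonneg (α * (a - b) * (a ^ (α - 3/4) * b ^ (-(1/4):ℝ)))]
  rw [hdiff]
  apply div_bound (by positivity) (by positivity) (by positivity)
  have e1 : (a ^ (α - 3/4)) ^ 2 = a ^ (2*α - 3/2) := by rw [sq_rpow ha.le]; congr 1; ring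
  have e2 : (b ^ (-(1/4):ℝ)) ^ 2 = b ^ (-(1/2):ℝ) := by rw [sq_rpow hb.le]; congr 1; ring
  have e3 : (a - b) ^ 2 ≤ (x - y) ^ 2 := abs_sub_sq_le x y
  have hp : (0:ℝ) ≤ a ^ (2*α - 3/2) * b ^ (-(1/2):ℝ) := by positivity
  calc (a ^ α - b ^ α) ^ 2
      ≤ 64 * α^2 * (a - b) ^ 2 * (a ^ (2*α - 3/2) * b ^ (-(1/2):ℝ)) := by
        rw [← e1, ← e2]; exact hsq
    _ = 64 * α^2 * ((a - b) ^ 2 * (a ^ (2*α - 3/2) * b ^ (-(1/2):ℝ))) := by ring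
    _ ≤ 64 * α^2 * ((x - y) ^ 2 * (a ^ (2*α - 3/2) * b ^ (-(1/2):ℝ))) :=
        mul_le_mul_of_nonneg_left (mul_le_mul_of_nonneg_right e3 hp) (by positivity)
    _ = 64 * α ^ 2 * (a ^ (2*α - 3/2) * b ^ (-(1/2):ℝ)) * (x - y) ^ 2 := by ring


lemma intervalIntegrable_abs_rpow {r : ℝ} (hr : -1 < r) (c d : ℝ) :
    IntervalIntegrable (fun y : ℝ => |y| ^ r) volume c d := by
  have key : ∀ c : ℝ, 0 ≤ c → IntervalIntegrable (fun y : ℝ => |y| ^ r) volume 0 c := by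
    intro c hc
    rw [intervalIntegrable_iff, uIoc_of_le hc]
    have h1 : IntegrableOn (fun y : ℝ => y ^ r) (Ioc 0 c) volume := by
      have h2 := intervalIntegrable_rpow' (a := 0) (b := c) hr
      rwa [intervalIntegrable_iff, uIoc_of_le hc] at h2
    exact h1.congr_fun (fun y hy => by rw [abs_of_pos hy.1]) measurableSet_Ioc
  have all : ∀ c : ℝ, IntervalIntegrable (fun y : ℝ => |y| ^ r) volume 0 c := by
    intro c
    rcases le_or_gt 0 c with hc | hc
    · exact key c hc
    · have h2 := (IntervalIntegrable.iff_comp_neg).1 (key (-c) (by linarith))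
      have h3 : (fun x : ℝ => |(-x)| ^ r) = fun x : ℝ => |x| ^ r := by
        funext x; rw [abs_neg]
      rw [h3] at h2
      simpa using h2
  exact (all c).symm.trans (all d)

lemma integrableOn_abs_rpow_Ioo {r : ℝ} (hr : -1 < r) {c : ℝ} (hc : 0 < c) :
    IntegrableOn (fun y : ℝ => |y| ^ r) (Ioo (-c) c) volume := by
  have h := intervalIntegrable_abs_rpow hr (-c) c
  rw [intervalIntegrable_iff, uIoc_of_le (by linarith)] at h
  exact h.mono_set Ioo_subset_Ioc_self

lemma integral_abs_rpow_Ioo {r : ℝ} (hr : -1 < r) {c : ℝ} (hc : 0 < c) :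
    ∫ y in Ioo (-c) c, |y| ^ r = 2 * c ^ (r+1) / (r+1) := by
  have hle : (-c : ℝ) ≤ c := by linarith
  have e0 : ∫ y in Ioo (-c) c, |y| ^ r = ∫ y in (-c)..c, |y| ^ r := by
    rw [intervalIntegral.integral_of_le hle, integral_Ioc_eq_integral_Ioo]
  have hsplit : (∫ y in (-c)..(0:ℝ), |y| ^ r) + (∫ y in (0:ℝ)..c, |y| ^ r)
      = ∫ y in (-c)..c, |y| ^ r :=
    intervalIntegral.integral_add_adjacent_intervals
      (intervalIntegrable_abs_rpow hr _ _) (intervalIntegrable_abs_rpow hr _ _)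
  have epos : ∫ y in (0:ℝ)..c, |y| ^ r = c ^ (r+1) / (r+1) := by
    have e1 : ∫ y in (0:ℝ)..c, |y| ^ r = ∫ y in (0:ℝ)..c, y ^ r := by
      apply intervalIntegral.integral_congr
      intro y hy
      rw [uIcc_of_le (by linarith)] at hy
      simp only
      rw [abs_of_nonneg hy.1]
    rw [e1, integral_rpow (Or.inl hr), Real.zero_rpow (by linarith : r + 1 ≠ 0)]
    ring
  have eneg : ∫ y in (-c)..(0:ℝ), |y| ^ r = c ^ (r+1) / (r+1) := by
    have e2 := intervalIntegral.integral_comp_neg (a := (0:ℝ)) (b := c) (fun y : ℝ => |y| ^ r)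
    simp only [abs_neg, neg_zero, neg_neg] at e2
    rw [← e2]
    exact epos
  rw [e0, ← hsplit, epos, eneg]
  ring

lemma integrableOn_rpow_Ioo_right {r : ℝ} {a : ℝ} (ha : 0 < a) (ha1 : a ≤ 1) :
    IntegrableOn (fun y : ℝ => y ^ r) (Ioo a 1) volume := by
  have hco : ContinuousOn (fun y : ℝ => y ^ r) (Icc a 1) := by
    apply ContinuousOn.rpow_const continuousOn_id
    intro y hy
    exact Or.inl (ne_of_gt (lt_of_lt_of_le ha hy.1))
  exact (hco.integrableOn_compact isCompact_Icc).mono_set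
    (Ioo_subset_Icc_self)

lemma integral_rpow_Ioo_right {r : ℝ} (hrne : r ≠ -1) {a : ℝ} (ha : 0 < a) (ha1 : a ≤ 1) :
    ∫ y in Ioo a 1, y ^ r = (1 - a ^ (r+1)) / (r+1) := by
  have h0 : (0:ℝ) ∉ Set.uIcc a 1 := by
    rw [uIcc_of_le ha1]
    intro h
    exact absurd h.1 (by linarith)
  have e0 : ∫ y in Ioo a 1, y ^ r = ∫ y in a..1, y ^ r := by
    rw [intervalIntegral.integral_of_le ha1, integral_Ioc_eq_integral_Ioo]
  rw [e0, integral_rpow (Or.inr ⟨hrne, h0⟩), Real.one_rpow]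

lemma integrableOn_abs_rpow_Ioo_left {r : ℝ} {a : ℝ} (ha : 0 < a) (ha1 : a ≤ 1) :
    IntegrableOn (fun y : ℝ => |y| ^ r) (Ioo (-1) (-a)) volume := by
  have hco : ContinuousOn (fun y : ℝ => |y| ^ r) (Icc (-1) (-a)) := by
    apply ContinuousOn.rpow_const continuous_abs.continuousOn
    intro y hy
    refine Or.inl (abs_ne_zero.2 ?_)
    intro h; rw [h] at hy; have := hy.2; linarith
  exact (hco.integrableOn_compact isCompact_Icc).mono_set Ioo_subset_Icc_self

lemma integrableOn_abs_rpow_Ioo_right {r : ℝ} {a : ℝ} (ha : 0 < a) (ha1 : a ≤ 1) :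
    IntegrableOn (fun y : ℝ => |y| ^ r) (Ioo a 1) volume := by
  apply (integrableOn_rpow_Ioo_right (r := r) ha ha1).congr_fun _ measurableSet_Ioo
  intro y hy
  show y ^ r = |y| ^ r
  rw [abs_of_pos (lt_trans ha hy.1)]

lemma integral_abs_rpow_Ioo_right {r : ℝ} (hrne : r ≠ -1) {a : ℝ} (ha : 0 < a) (ha1 : a ≤ 1) :
    ∫ y in Ioo a 1, |y| ^ r = (1 - a ^ (r+1)) / (r+1) := by
  rw [← integral_rpow_Ioo_right hrne ha ha1]
  apply setIntegral_congr_fun measurableSet_Ioo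
  intro y hy
  simp only
  rw [abs_of_pos (lt_trans ha hy.1)]

lemma integral_abs_rpow_Ioo_left {r : ℝ} (hrne : r ≠ -1) {a : ℝ} (ha : 0 < a) (ha1 : a ≤ 1) :
    ∫ y in Ioo (-1) (-a), |y| ^ r = (1 - a ^ (r+1)) / (r+1) := by
  have hle : (-1:ℝ) ≤ -a := by linarith
  have e0 : ∫ y in Ioo (-1:ℝ) (-a), |y| ^ r = ∫ y in (-1:ℝ)..(-a), |y| ^ r := by
    rw [intervalIntegral.integral_of_le hle, integral_Ioc_eq_integral_Ioo]
  have e2 := intervalIntegral.integral_comp_neg (a := a) (b := (1:ℝ)) (fun y : ℝ => |y| ^ r)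
  simp only [abs_neg] at e2
  rw [e0, ← e2]
  have e3 : ∫ y in a..(1:ℝ), |y| ^ r = ∫ y in Ioo a 1, |y| ^ r := by
    rw [intervalIntegral.integral_of_le ha1, integral_Ioc_eq_integral_Ioo]
  rw [e3, integral_abs_rpow_Ioo_right hrne ha ha1]


lemma ae_ne_zero : ∀ᵐ y : ℝ ∂volume, y ≠ 0 := by
  rw [ae_iff]
  have : {y : ℝ | ¬ y ≠ 0} = {0} := by ext y; simp
  rw [this]
  exact measure_singleton 0

lemma fbar_continuous {α : ℝ} (h0 : 0 < α) : Continuous (fbar α) := by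
  unfold fbar
  exact continuous_const.sub (continuous_abs.rpow_const fun x => Or.inr h0.le)

lemma F_meas {α : ℝ} (h0 : 0 < α) :
    Measurable (fun p : ℝ × ℝ => (fbar α p.1 - fbar α p.2) ^ 2 / (p.1 - p.2) ^ 2) := by
  have h1 : Continuous (fun p : ℝ × ℝ => (fbar α p.1 - fbar α p.2) ^ 2) :=
    (((fbar_continuous h0).comp continuous_fst).sub
      ((fbar_continuous h0).comp continuous_snd)).pow 2
  have h2 : Continuous (fun p : ℝ × ℝ => (p.1 - p.2) ^ 2) :=
    (continuous_fst.sub continuous_snd).pow 2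
  exact h1.measurable.div h2.measurable

lemma F_nonneg (α x y : ℝ) : 0 ≤ (fbar α x - fbar α y) ^ 2 / (x - y) ^ 2 :=
  div_nonneg (sq_nonneg _) (sq_nonneg _)

lemma inner_bound {α x : ℝ} (hx : x ∈ Ioo (-1:ℝ) 1) (hx0 : x ≠ 0)
    (h0 : 0 < α) (h8 : α ≤ 1/8) :
    (∫ y in Ioo (-1:ℝ) 1, (fbar α x - fbar α y) ^ 2 / (x - y) ^ 2)
      ≤ 768 * α ^ 2 * |x| ^ (2*α - 1) := by
  have h1 : α ≤ 1 := by linarith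
  set a := |x| with ha_def
  have ha0 : 0 < a := abs_pos.2 hx0
  have ha1 : a < 1 := abs_lt.2 ⟨hx.1, hx.2⟩
  set F : ℝ → ℝ := fun y => (fbar α x - fbar α y) ^ 2 / (x - y) ^ 2 with hF_def
  have hFm : Measurable F := by
    have h1' : Continuous (fun y : ℝ => (fbar α x - fbar α y) ^ 2) :=
      (continuous_const.sub (fbar_continuous h0)).pow 2
    have h2' : Continuous (fun y : ℝ => (x - y) ^ 2) :=
      (continuous_const.sub continuous_id).pow 2
    exact h1'.measurable.div h2'.measurable
  have hFnn : ∀ y, 0 ≤ F y := fun y => F_nonneg α x y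
  set A : Set ℝ := Icc (-a) a with hA_def
  set B1 : Set ℝ := Ioo (-1:ℝ) (-a) with hB1_def
  set B2 : Set ℝ := Ioo a 1 with hB2_def
  have hset : Ioo (-1:ℝ) 1 = (B1 ∪ A) ∪ B2 := by
    ext y
    simp only [hB1_def, hA_def, hB2_def, mem_union, mem_Ioo, mem_Icc]
    constructor
    · rintro ⟨hy1, hy2⟩
      rcases lt_or_ge y (-a) with h | h
      · exact Or.inl (Or.inl ⟨hy1, h⟩)
      · rcases le_or_gt y a with h2 | h2
        · exact Or.inl (Or.inr ⟨h, h2⟩)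
        · exact Or.inr ⟨h2, hy2⟩
    · rintro ((⟨u1, u2⟩ | ⟨u1, u2⟩) | ⟨u1, u2⟩) <;> constructor <;> linarith
  -- piece A
  set cA : ℝ := 64 * α ^ 2 * a ^ (2*α - 3/2) with hcA_def
  have hcA_nn : 0 ≤ cA := by positivity
  have hgA_int : IntegrableOn (fun y : ℝ => cA * |y| ^ (-(1/2):ℝ)) A volume := by
    rw [hA_def, IntegrableOn, Measure.restrict_congr_set Ioo_ae_eq_Icc.symm]
    exact ((integrableOn_abs_rpow_Ioo (by norm_num) ha0)).const_mul cA
  have hFA_le : ∀ᵐ y ∂(volume.restrict A), F y ≤ cA * |y| ^ (-(1/2):ℝ) := by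
    filter_upwards [ae_restrict_mem measurableSet_Icc, ae_restrict_of_ae ae_ne_zero]
      with y hyA hy0
    have hle : |y| ≤ a := abs_le.2 hyA
    have := F_le_main hy0 hle h0 h1
    calc F y ≤ 64 * α ^ 2 * (a ^ (2*α - 3/2) * |y| ^ (-(1/2):ℝ)) := this
      _ = cA * |y| ^ (-(1/2):ℝ) := by rw [hcA_def]; ring
  have hFA_int : IntegrableOn F A volume := by
    apply Integrable.mono' hgA_int (hFm.aestronglyMeasurable)
    filter_upwards [hFA_le] with y hy
    rw [Real.norm_eq_abs, abs_of_nonneg (hFnn y)]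
    exact hy
  have hIA : (∫ y in A, F y) ≤ 256 * α ^ 2 * a ^ (2*α - 1) := by
    have step := integral_mono_ae hFA_int hgA_int hFA_le
    have val : (∫ y in A, cA * |y| ^ (-(1/2):ℝ)) = cA * (4 * a ^ ((1:ℝ)/2)) := by
      rw [MeasureTheory.integral_const_mul, hA_def, setIntegral_congr_set Ioo_ae_eq_Icc.symm,
        integral_abs_rpow_Ioo (by norm_num) ha0]
      rw [show (-(1/2:ℝ)) + 1 = (1:ℝ)/2 by norm_num]
      ring
    rw [val] at step
    have e : cA * (4 * a ^ ((1:ℝ)/2)) = 256 * α ^ 2 * a ^ (2*α - 1) := by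
      rw [hcA_def]
      have : a ^ (2*α - 3/2) * a ^ ((1:ℝ)/2) = a ^ (2*α - 1) := by
        rw [← Real.rpow_add ha0]; congr 1 <;> ring
      nlinarith [this]
    linarith [step, e.symm.le, e.le]
  -- pieces B1, B2
  set cB : ℝ := 64 * α ^ 2 * a ^ (-(1/2):ℝ) with hcB_def
  have hcB_nn : 0 ≤ cB := by positivity
  have hrne : 2*α - 3/2 ≠ -1 := by intro h; linarith
  have hswap : ∀ y : ℝ, a ≤ |y| → F y ≤ cB * |y| ^ (2*α - 3/2) := by
    intro y hay
    have h := F_le_main (x := y) (y := x) hx0 hay h0 h1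
    have e1 : (fbar α y - fbar α x) ^ 2 = (fbar α x - fbar α y) ^ 2 := by ring
    have e2 : (y - x) ^ 2 = (x - y) ^ 2 := by ring
    rw [e1, e2] at h
    calc F y ≤ 64 * α ^ 2 * (|y| ^ (2*α - 3/2) * a ^ (-(1/2):ℝ)) := h
      _ = cB * |y| ^ (2*α - 3/2) := by rw [hcB_def]; ring
  have hB2mem : ∀ y ∈ B2, a ≤ |y| := by
    intro y hy
    rw [abs_of_pos (lt_trans ha0 hy.1)]
    exact hy.1.le
  have hB1mem : ∀ y ∈ B1, a ≤ |y| := by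
    intro y hy
    have : y < -a := hy.2
    rw [abs_of_neg (by linarith : y < 0)]
    linarith
  have hgB2_int : IntegrableOn (fun y : ℝ => cB * |y| ^ (2*α - 3/2)) B2 volume :=
    (integrableOn_abs_rpow_Ioo_right ha0 ha1.le).const_mul cB
  have hgB1_int : IntegrableOn (fun y : ℝ => cB * |y| ^ (2*α - 3/2)) B1 volume :=
    (integrableOn_abs_rpow_Ioo_left ha0 ha1.le).const_mul cB
  have hFB2_int : IntegrableOn F B2 volume := by
    apply Integrable.mono' hgB2_int (hFm.aestronglyMeasurable)
    filter_upwards [ae_restrict_mem measurableSet_Ioo] with y hy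
    rw [Real.norm_eq_abs, abs_of_nonneg (hFnn y)]
    exact hswap y (hB2mem y hy)
  have hFB1_int : IntegrableOn F B1 volume := by
    apply Integrable.mono' hgB1_int (hFm.aestronglyMeasurable)
    filter_upwards [ae_restrict_mem measurableSet_Ioo] with y hy
    rw [Real.norm_eq_abs, abs_of_nonneg (hFnn y)]
    exact hswap y (hB1mem y hy)
  -- value bound for the B-integrals
  have ht1 : (1:ℝ) ≤ a ^ (2*α - 3/2 + 1) :=
    Real.one_le_rpow_of_pos_of_le_one_of_nonpos ha0 ha1.le (by linarith)
  have hdneg : 2*α - 3/2 + 1 < 0 := by linarith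
  have hval : (1 - a ^ (2*α - 3/2 + 1)) / (2*α - 3/2 + 1) ≤ 4 * a ^ (2*α - 3/2 + 1) := by
    rw [div_le_iff_of_neg hdneg]
    nlinarith [ht1, mul_le_mul_of_nonneg_left
      (show 2*α - 3/2 + 1 ≤ -(1/4:ℝ) by linarith)
      (by positivity : (0:ℝ) ≤ 4 * a ^ (2*α - 3/2 + 1))]
  have hcmul : cB * (4 * a ^ (2*α - 3/2 + 1)) = 256 * α ^ 2 * a ^ (2*α - 1) := by
    rw [hcB_def]
    have : a ^ (-(1/2):ℝ) * a ^ (2*α - 3/2 + 1) = a ^ (2*α - 1) := by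
      rw [← Real.rpow_add ha0]; congr 1; ring
    nlinarith [this]
  have hIB2 : (∫ y in B2, F y) ≤ 256 * α ^ 2 * a ^ (2*α - 1) := by
    have step := integral_mono_ae hFB2_int hgB2_int (by
      filter_upwards [ae_restrict_mem measurableSet_Ioo] with y hy
      exact hswap y (hB2mem y hy))
    have val : (∫ y in B2, cB * |y| ^ (2*α - 3/2))
        = cB * ((1 - a ^ (2*α - 3/2 + 1)) / (2*α - 3/2 + 1)) := by
      rw [MeasureTheory.integral_const_mul, hB2_def, integral_abs_rpow_Ioo_right hrne ha0 ha1.le]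
    rw [val] at step
    calc (∫ y in B2, F y) ≤ cB * ((1 - a ^ (2*α - 3/2 + 1)) / (2*α - 3/2 + 1)) := step
      _ ≤ cB * (4 * a ^ (2*α - 3/2 + 1)) := mul_le_mul_of_nonneg_left hval hcB_nn
      _ = 256 * α ^ 2 * a ^ (2*α - 1) := hcmul
  have hIB1 : (∫ y in B1, F y) ≤ 256 * α ^ 2 * a ^ (2*α - 1) := by
    have step := integral_mono_ae hFB1_int hgB1_int (by
      filter_upwards [ae_restrict_mem measurableSet_Ioo] with y hy
      exact hswap y (hB1mem y hy))
    have val : (∫ y in B1, cB * |y| ^ (2*α - 3/2))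
        = cB * ((1 - a ^ (2*α - 3/2 + 1)) / (2*α - 3/2 + 1)) := by
      rw [MeasureTheory.integral_const_mul, hB1_def, integral_abs_rpow_Ioo_left hrne ha0 ha1.le]
    rw [val] at step
    calc (∫ y in B1, F y) ≤ cB * ((1 - a ^ (2*α - 3/2 + 1)) / (2*α - 3/2 + 1)) := step
      _ ≤ cB * (4 * a ^ (2*α - 3/2 + 1)) := mul_le_mul_of_nonneg_left hval hcB_nn
      _ = 256 * α ^ 2 * a ^ (2*α - 1) := hcmul
  -- combine
  have hdisj1 : Disjoint B1 A := by
    rw [Set.disjoint_left]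
    intro y hy1 hyA
    exact absurd hyA.1 (by exact not_le.2 hy1.2)
  have hdisj2 : Disjoint (B1 ∪ A) B2 := by
    rw [Set.disjoint_left]
    rintro y (hy | hy) hy2
    · have := hy.2; have := hy2.1; linarith
    · have := hy.2; have := hy2.1; linarith
  have hsplit2 : (∫ y in B1 ∪ A, F y) = (∫ y in B1, F y) + ∫ y in A, F y :=
    setIntegral_union hdisj1 measurableSet_Icc hFB1_int hFA_int
  have hsplit1 : (∫ y in Ioo (-1:ℝ) 1, F y)
      = (∫ y in B1 ∪ A, F y) + ∫ y in B2, F y := by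
    rw [hset]
    exact setIntegral_union hdisj2 measurableSet_Ioo (hFB1_int.union hFA_int) hFB2_int
  have : (∫ y in Ioo (-1:ℝ) 1, F y) ≤ 768 * α ^ 2 * a ^ (2*α - 1) := by
    rw [hsplit1, hsplit2]
    linarith [hIA, hIB1, hIB2]
  exact this


lemma qbar_nonneg (α : ℝ) : 0 ≤ Qbar α :=
  integral_nonneg fun x => integral_nonneg fun y => F_nonneg α x y

lemma qbar_le {α : ℝ} (h0 : 0 < α) (h8 : α ≤ 1/8) : Qbar α ≤ 768 * α := by
  set s : Set ℝ := Ioo (-1:ℝ) 1 with hs_def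
  set φ : ℝ → ℝ := fun x => 768 * α ^ 2 * |x| ^ (2*α - 1) with hφ_def
  have hφint : IntegrableOn φ s volume :=
    (integrableOn_abs_rpow_Ioo (by linarith) one_pos).const_mul _
  set innerF : ℝ → ℝ := fun x => ∫ y in s, (fbar α x - fbar α y) ^ 2 / (x - y) ^ 2
    with hinner_def
  have hinner_sm : AEStronglyMeasurable innerF (volume.restrict s) := by
    have h := ((F_meas h0).stronglyMeasurable).integral_prod_right'
      (ν := volume.restrict s)
    exact h.aestronglyMeasurable
  have hinner_nn : ∀ x, 0 ≤ innerF x := fun x => integral_nonneg fun y => F_nonneg α x y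
  have h_le : ∀ᵐ x ∂volume.restrict s, innerF x ≤ φ x := by
    filter_upwards [ae_restrict_mem measurableSet_Ioo, ae_restrict_of_ae ae_ne_zero]
      with x hx hx0
    exact inner_bound hx hx0 h0 h8
  have hinner_int : Integrable innerF (volume.restrict s) := by
    apply Integrable.mono' hφint hinner_sm
    filter_upwards [h_le] with x hx
    rw [Real.norm_eq_abs, abs_of_nonneg (hinner_nn x)]
    exact hx
  have hQ : Qbar α = ∫ x in s, innerF x := rfl
  have hstep := integral_mono_ae hinner_int hφint h_le
  have hval : (∫ x in s, φ x) = 768 * α := by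
    rw [hφ_def]
    simp only
    rw [MeasureTheory.integral_const_mul, hs_def, integral_abs_rpow_Ioo (by linarith) one_pos,
      Real.one_rpow]
    have h2 : 2*α - 1 + 1 = 2*α := by ring
    rw [h2]
    field_simp
  rw [hQ]
  linarith [hstep, hval.le]

lemma integrableOn_F_prod {α : ℝ} (h0 : 0 < α) (h1 : α ≤ 1) :
    IntegrableOn (fun p : ℝ × ℝ => (fbar α p.1 - fbar α p.2) ^ 2 / (p.1 - p.2) ^ 2)
      (Ioo (-1:ℝ) 1 ×ˢ Ioo (-1:ℝ) 1) volume := by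
  rw [IntegrableOn, Measure.volume_eq_prod, ← Measure.prod_restrict]
  set μ := (volume.restrict (Ioo (-1:ℝ) 1)).prod (volume.restrict (Ioo (-1:ℝ) 1)) with hμ
  have hD : Integrable (fun p : ℝ × ℝ => (4 * |p.1| ^ (α-1)) * |p.2| ^ (α-1)) μ :=
    Integrable.mul_prod ((integrableOn_abs_rpow_Ioo (by linarith) one_pos).const_mul 4)
      (integrableOn_abs_rpow_Ioo (by linarith) one_pos)
  apply Integrable.mono' hD ((F_meas h0).aestronglyMeasurable)
  have hae : ∀ᵐ p : ℝ × ℝ ∂μ, p.1 ≠ 0 ∧ p.2 ≠ 0 := by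
    rw [ae_iff]
    have hsub : {p : ℝ × ℝ | ¬(p.1 ≠ 0 ∧ p.2 ≠ 0)}
        ⊆ (({0} : Set ℝ) ×ˢ (univ : Set ℝ)) ∪ ((univ : Set ℝ) ×ˢ ({0} : Set ℝ)) := by
      intro p hp
      simp only [mem_setOf_eq, not_and_or, not_not] at hp
      rcases hp with hp | hp
      · exact Or.inl ⟨by simpa using hp, mem_univ _⟩
      · exact Or.inr ⟨mem_univ _, by simpa using hp⟩
    apply measure_mono_null hsub
    have hz : (volume.restrict (Ioo (-1:ℝ) 1)) ({0} : Set ℝ) = 0 := by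
      rw [Measure.restrict_apply (measurableSet_singleton 0)]
      exact measure_mono_null Set.inter_subset_left Real.volume_singleton
    apply le_antisymm _ zero_le
    calc μ ((({0} : Set ℝ) ×ˢ (univ : Set ℝ)) ∪ ((univ : Set ℝ) ×ˢ ({0} : Set ℝ)))
        ≤ μ (({0} : Set ℝ) ×ˢ (univ : Set ℝ)) + μ ((univ : Set ℝ) ×ˢ ({0} : Set ℝ)) :=
          measure_union_le _ _
      _ = 0 := by
          rw [hμ, Measure.prod_prod, Measure.prod_prod, hz]
          simp
  filter_upwards [hae] with p hp
  rw [Real.norm_eq_abs, abs_of_nonneg (F_nonneg α p.1 p.2)]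
  calc (fbar α p.1 - fbar α p.2) ^ 2 / (p.1 - p.2) ^ 2
      ≤ 4 * (|p.1| ^ (α - 1) * |p.2| ^ (α - 1)) := F_le_prod hp.1 hp.2 h0 h1
    _ = (4 * |p.1| ^ (α-1)) * |p.2| ^ (α-1) := by ring

lemma memL2 {α : ℝ} (h0 : 0 < α) :
    MemLp (fbar α) 2 (volume.restrict (Ioo (-1:ℝ) 1)) := by
  haveI : IsFiniteMeasure (volume.restrict (Ioo (-1:ℝ) 1)) :=
    ⟨by rw [Measure.restrict_apply_univ]; exact measure_Ioo_lt_top⟩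
  apply MemLp.of_bound (fbar_continuous h0).aestronglyMeasurable 1
  filter_upwards [ae_restrict_mem measurableSet_Ioo] with x hx
  rw [Real.norm_eq_abs]
  have hx1 : |x| ≤ 1 := le_of_lt (abs_lt.2 ⟨hx.1, hx.2⟩)
  have h1 : |x| ^ α ≤ 1 := Real.rpow_le_one (abs_nonneg x) hx1 h0.le
  have h2 : 0 ≤ |x| ^ α := Real.rpow_nonneg (abs_nonneg x) α
  rw [abs_le]
  constructor <;> simp only [fbar] <;> linarith

lemma one_sub_rpow_le {t α : ℝ} (ht0 : 0 < t) (ht1 : t ≤ 1) (h0 : 0 < α) :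
    1 - t ^ α ≤ 4 * α * t ^ (-(1/4):ℝ) := by
  have hu : (1:ℝ) ≤ t⁻¹ := (one_le_inv₀ ht0).2 ht1
  have h1 : t ^ α = Real.exp (-(α * Real.log t⁻¹)) := by
    rw [Real.rpow_def_of_pos ht0, Real.log_inv]; ring_nf
  have h2 : 1 - t ^ α ≤ α * Real.log t⁻¹ := by
    rw [h1]; linarith [Real.add_one_le_exp (-(α * Real.log t⁻¹))]
  have h3 : Real.log t⁻¹ ≤ 4 * (t⁻¹) ^ ((1:ℝ)/4) := log_le_four_rpow hu
  have h4 : (t⁻¹) ^ ((1:ℝ)/4) = t ^ (-(1/4):ℝ) := by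
    rw [Real.inv_rpow ht0.le, ← Real.rpow_neg ht0.le]
  rw [h4] at h3
  calc 1 - t ^ α ≤ α * Real.log t⁻¹ := h2
    _ ≤ α * (4 * t ^ (-(1/4):ℝ)) := mul_le_mul_of_nonneg_left h3 h0.le
    _ = 4 * α * t ^ (-(1/4):ℝ) := by ring

lemma l2sq_nonneg (α : ℝ) : 0 ≤ L2sqBar α := integral_nonneg fun x => sq_nonneg _

lemma l2sq_le {α : ℝ} (h0 : 0 < α) (h1 : α ≤ 1) : L2sqBar α ≤ 64 * α ^ 2 := by
  set s : Set ℝ := Ioo (-1:ℝ) 1 with hs_def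
  have hg_int : IntegrableOn (fun x : ℝ => 16 * α ^ 2 * |x| ^ (-(1/2):ℝ)) s volume :=
    (integrableOn_abs_rpow_Ioo (by norm_num) one_pos).const_mul _
  have h_le : ∀ᵐ x ∂volume.restrict s, (fbar α x) ^ 2 ≤ 16 * α ^ 2 * |x| ^ (-(1/2):ℝ) := by
    filter_upwards [ae_restrict_mem measurableSet_Ioo, ae_restrict_of_ae ae_ne_zero]
      with x hx hx0
    have ht0 : 0 < |x| := abs_pos.2 hx0
    have ht1 : |x| ≤ 1 := le_of_lt (abs_lt.2 ⟨hx.1, hx.2⟩)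
    have hb := one_sub_rpow_le ht0 ht1 h0
    have hnn : 0 ≤ 1 - |x| ^ α := by
      have := Real.rpow_le_one (abs_nonneg x) ht1 h0.le
      linarith
    have hsq : (1 - |x| ^ α) ^ 2 ≤ (4 * α * |x| ^ (-(1/4):ℝ)) ^ 2 := by
      apply sq_le_sq' _ hb
      have : 0 ≤ 4 * α * |x| ^ (-(1/4):ℝ) := by positivity
      linarith
    have e1 : (4 * α * |x| ^ (-(1/4):ℝ)) ^ 2 = 16 * α ^ 2 * |x| ^ (-(1/2):ℝ) := by
      have e2 : (|x| ^ (-(1/4):ℝ)) ^ 2 = |x| ^ (-(1/2):ℝ) := by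
        rw [sq_rpow ht0.le]; congr 1; ring
      nlinarith [e2]
    calc (fbar α x) ^ 2 = (1 - |x| ^ α) ^ 2 := by rw [fbar]
      _ ≤ (4 * α * |x| ^ (-(1/4):ℝ)) ^ 2 := hsq
      _ = 16 * α ^ 2 * |x| ^ (-(1/2):ℝ) := e1
  have hf_int : IntegrableOn (fun x : ℝ => (fbar α x) ^ 2) s volume := by
    apply Integrable.mono' hg_int
      (((fbar_continuous h0).pow 2).aestronglyMeasurable)
    filter_upwards [h_le] with x hx
    rw [Real.norm_eq_abs, abs_of_nonneg (sq_nonneg _)]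
    exact hx
  have hstep := integral_mono_ae hf_int hg_int h_le
  have hval : (∫ x in s, 16 * α ^ 2 * |x| ^ (-(1/2):ℝ)) = 64 * α ^ 2 := by
    rw [MeasureTheory.integral_const_mul, hs_def, integral_abs_rpow_Ioo (by norm_num) one_pos,
      Real.one_rpow]
    norm_num
    ring
  have hL : L2sqBar α = ∫ x in s, (fbar α x) ^ 2 := rfl
  rw [hL]
  linarith [hstep, hval.le]


end AuxProof

/-- For α ∈ (0,1], the reflected functions f̄_α(x) = 1 - |x|^α lie in
H^{1/2}(-1,1) (they are in L²(-1,1) and the Gagliardo seminorm integrand is integrable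
on (-1,1)²), and ‖f̄_α‖_{H^{1/2}(-1,1)} → 0 as α → 0⁺; in particular the Gagliardo
seminorm tends to 0 as α → 0⁺. -/
theorem reflected_halfnorm_tendsto_zero :
    (∀ α ∈ Ioc (0:ℝ) 1,
      MemLp (fbar α) 2 (volume.restrict (Ioo (-1:ℝ) 1)) ∧
      IntegrableOn (fun p : ℝ × ℝ => (fbar α p.1 - fbar α p.2) ^ 2 / (p.1 - p.2) ^ 2)
        (Ioo (-1:ℝ) 1 ×ˢ Ioo (-1:ℝ) 1) volume) ∧
    Tendsto HhalfBar (nhdsWithin 0 (Ioi 0)) (nhds 0) ∧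
    Tendsto Qbar (nhdsWithin 0 (Ioi 0)) (nhds 0) := by
  have hmem : Ioo (0:ℝ) (1/8) ∈ nhdsWithin (0:ℝ) (Ioi 0) :=
    Ioo_mem_nhdsGT_of_mem ⟨le_refl 0, by norm_num⟩
  have h768 : Tendsto (fun α : ℝ => 768 * α) (nhdsWithin 0 (Ioi 0)) (nhds 0) := by
    have hc : Continuous (fun α : ℝ => 768 * α) := by continuity
    have h := hc.tendsto (0:ℝ)
    simp only [mul_zero] at h
    exact h.mono_left nhdsWithin_le_nhds
  have hQten : Tendsto Qbar (nhdsWithin 0 (Ioi 0)) (nhds 0) := by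
    apply tendsto_of_tendsto_of_tendsto_of_le_of_le' tendsto_const_nhds h768
    · exact Eventually.of_forall qbar_nonneg
    · filter_upwards [hmem] with α hα
      exact qbar_le hα.1 hα.2.le
  have h64 : Tendsto (fun α : ℝ => 64 * α ^ 2) (nhdsWithin 0 (Ioi 0)) (nhds 0) := by
    have hc : Continuous (fun α : ℝ => 64 * α ^ 2) := by continuity
    have h := hc.tendsto (0:ℝ)
    norm_num at h
    exact h.mono_left nhdsWithin_le_nhds
  have hLten : Tendsto L2sqBar (nhdsWithin 0 (Ioi 0)) (nhds 0) := by
    apply tendsto_of_tendsto_of_tendsto_of_le_of_le' tendsto_const_nhds h64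
    · exact Eventually.of_forall l2sq_nonneg
    · filter_upwards [hmem] with α hα
      exact l2sq_le hα.1 (by linarith [hα.2])
  have hsum : Tendsto (fun α => L2sqBar α + Qbar α) (nhdsWithin 0 (Ioi 0)) (nhds 0) := by
    have h := hLten.add hQten
    simpa using h
  have hH : Tendsto HhalfBar (nhdsWithin 0 (Ioi 0)) (nhds 0) := by
    have hc : Tendsto Real.sqrt (nhds 0) (nhds 0) := by
      have h := Real.continuous_sqrt.tendsto 0
      simpa [Real.sqrt_zero] using h
    exact hc.comp hsum
  exact ⟨fun α hα => ⟨memL2 hα.1, integrableOn_F_prod hα.1 hα.2⟩, hH, hQten⟩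


end
end

section
/- Subject to the horizontal-shear boundary condition BC2, if L>2 then J_L=0; in fact there exists an admissible pair (u,β) satisfying BC2 with E_L(u,β)=0. -/
open MeasureTheory Set Filter Topology
open scoped ENNReal NNReal

noncomputable section

abbrev Pt2 := Fin 2 → ℝ
abbrev Mat2 := Matrix (Fin 2) (Fin 2) ℝ

/-- The rectangle Ω_L = (0,1) × (0,L). -/
def Omega (L : ℝ) : Set Pt2 := {x | x 0 ∈ Ioo (0:ℝ) 1 ∧ x 1 ∈ Ioo (0:ℝ) L}

/-- Partial derivative ∂_j of a scalar function. -/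
def pd (j : Fin 2) (f : Pt2 → ℝ) (x : Pt2) : ℝ := fderiv ℝ f x (Pi.single j 1)

/-- C¹ test function compactly supported in Ω_L. -/
def IsTest (L : ℝ) (f : Pt2 → ℝ) : Prop :=
  ContDiff ℝ 1 f ∧ HasCompactSupport f ∧ tsupport f ⊆ Omega L

/-- Du is the weak (distributional) gradient of u on Ω_L. -/
def IsWeakGradient (L : ℝ) (u : Pt2 → Pt2) (Du : Pt2 → Mat2) : Prop :=
  ∀ f : Pt2 → ℝ, IsTest L f → ∀ i j,
    ∫ x in Omega L, u x i * pd j f x = - ∫ x in Omega L, Du x i j * f x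

/-- Symmetric part of a matrix. -/
def symPart (M : Mat2) : Mat2 := (2:ℝ)⁻¹ • (M + M.transpose)

/-- Squared Frobenius norm. -/
def normSq (M : Mat2) : ℝ := ∑ i, ∑ j, (M i j)^2

/-- The two slip matrices (up to scalar multiples). -/
def SlipSet : Set Mat2 :=
  {M | ∃ s : ℝ, M = s • !![(1:ℝ), -1; 1, -1] ∨ M = s • !![(1:ℝ), 1; -1, -1]}

/-- The single-slip side condition. -/
def SingleSlip (L : ℝ) (β : Pt2 → Mat2) : Prop :=
  ∀ᵐ x ∂(volume.restrict (Omega L)), β x ∈ SlipSet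

/-- Total variation of the row-wise distributional curl of β on Ω_L. -/
def TVcurl (L : ℝ) (β : Pt2 → Mat2) : ℝ≥0∞ :=
  sSup {t | ∃ φ : Fin 2 → Pt2 → ℝ,
    (∀ i, IsTest L (φ i)) ∧ (∀ i x, φ i x ∈ Icc (-1:ℝ) 1) ∧
    t = ENNReal.ofReal (∑ i, ∫ x in Omega L,
          (β x i 1 * pd 0 (φ i) x - β x i 0 * pd 1 (φ i) x))}

/-- The energy E_L(u,β) (expressed through the weak gradient Du of u). -/
def Energy (L σ : ℝ) (Du β : Pt2 → Mat2) : ℝ≥0∞ :=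
  (∫⁻ x in Omega L, ENNReal.ofReal (normSq (symPart (Du x - β x)))) +
    ENNReal.ofReal σ * TVcurl L β

/-- Admissible pair (u,β), with Du the weak gradient of u. -/
def IsAdmissible (L : ℝ) (u : Pt2 → Pt2) (Du β : Pt2 → Mat2) : Prop :=
  ContinuousOn u (closure (Omega L)) ∧
  IsWeakGradient L u Du ∧
  (∀ i j, MemLp (fun x => Du x i j) 2 (volume.restrict (Omega L))) ∧
  (∀ i j, LocallyIntegrableOn (fun x => β x i j) (Omega L)) ∧
  SingleSlip L β

/-- Dirichlet boundary conditions: u = 0 at x₂ = 0 and u = γ v at x₂ = L. -/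
def BCv (L γ : ℝ) (v : Fin 2 → ℝ) (u : Pt2 → Pt2) : Prop :=
  (∀ x ∈ closure (Omega L), x 1 = 0 → u x = 0) ∧
  (∀ x ∈ closure (Omega L), x 1 = L → u x = γ • v)

/-- The infimum energy J_L. -/
def J (L σ γ : ℝ) (v : Fin 2 → ℝ) : ℝ≥0∞ :=
  sInf {e | ∃ u Du β, IsAdmissible L u Du β ∧ BCv L γ v u ∧ TVcurl L β ≠ ⊤ ∧
    e = Energy L σ Du β}

namespace BC2

def pr (i : Fin 2) : Pt2 →L[ℝ] ℝ := ContinuousLinearMap.proj (R := ℝ) (φ := fun _ : Fin 2 => ℝ) i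
def lm : Pt2 →L[ℝ] ℝ := pr 0 - pr 1
def lp : Pt2 →L[ℝ] ℝ := pr 0 + pr 1

@[simp] lemma lm_apply (x : Pt2) : lm x = x 0 - x 1 := rfl
@[simp] lemma lp_apply (x : Pt2) : lp x = x 0 + x 1 := rfl

def FF (L γ : ℝ) (t : ℝ) : ℝ :=
  (γ/2) * Real.smoothTransition ((-1 - (L-2)/2 - t) / ((L-2)/2))
def GG (L γ : ℝ) (s : ℝ) : ℝ :=
  (γ/2) * Real.smoothTransition ((s - 1) / ((L-2)/2))

lemma contDiff_FF (L γ : ℝ) {n : ℕ∞} : ContDiff ℝ n (FF L γ) := by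
  have h1 : ContDiff ℝ n (fun t : ℝ => (-1 - (L-2)/2 - t) / ((L-2)/2)) :=
    (contDiff_const.sub contDiff_id).div_const _
  exact contDiff_const.mul (Real.smoothTransition.contDiff.comp h1)

lemma contDiff_GG (L γ : ℝ) {n : ℕ∞} : ContDiff ℝ n (GG L γ) := by
  have h1 : ContDiff ℝ n (fun t : ℝ => (t - 1) / ((L-2)/2)) :=
    (contDiff_id.sub contDiff_const).div_const _
  exact contDiff_const.mul (Real.smoothTransition.contDiff.comp h1)

variable {L γ : ℝ}

lemma eps_pos (hL : 2 < L) : 0 < (L-2)/2 := by linarith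

lemma FF_eq_zero (hL : 2 < L) {t : ℝ} (ht : -1 - (L-2)/2 ≤ t) : FF L γ t = 0 := by
  have : (-1 - (L-2)/2 - t) / ((L-2)/2) ≤ 0 :=
    div_nonpos_of_nonpos_of_nonneg (by linarith) (le_of_lt (eps_pos hL))
  rw [FF, Real.smoothTransition.zero_of_nonpos this, mul_zero]

lemma FF_eq_half (hL : 2 < L) {t : ℝ} (ht : t ≤ 1 - L) : FF L γ t = γ/2 := by
  have h1 : (1:ℝ) ≤ (-1 - (L-2)/2 - t) / ((L-2)/2) := by
    rw [le_div_iff₀ (eps_pos hL)]; linarith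
  rw [FF, Real.smoothTransition.one_of_one_le h1, mul_one]

lemma GG_eq_zero (hL : 2 < L) {s : ℝ} (hs : s ≤ 1) : GG L γ s = 0 := by
  have : (s - 1) / ((L-2)/2) ≤ 0 :=
    div_nonpos_of_nonpos_of_nonneg (by linarith) (le_of_lt (eps_pos hL))
  rw [GG, Real.smoothTransition.zero_of_nonpos this, mul_zero]

lemma GG_eq_half (hL : 2 < L) {s : ℝ} (hs : 1 + (L-2)/2 ≤ s) : GG L γ s = γ/2 := by
  have h1 : (1:ℝ) ≤ (s - 1) / ((L-2)/2) := by
    rw [le_div_iff₀ (eps_pos hL)]; linarith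
  rw [GG, Real.smoothTransition.one_of_one_le h1, mul_one]

lemma deriv_FF_eq_zero (hL : 2 < L) {t : ℝ} (ht : -1 - (L-2)/2 < t) :
    deriv (FF L γ) t = 0 := by
  have h : FF L γ =ᶠ[𝓝 t] fun _ => 0 := by
    filter_upwards [Ioi_mem_nhds ht] with s hs
    exact FF_eq_zero hL (le_of_lt hs)
  rw [h.deriv_eq, deriv_const]

lemma deriv_GG_eq_zero_lt (hL : 2 < L) {s : ℝ} (hs : s < 1) :
    deriv (GG L γ) s = 0 := by
  have h : GG L γ =ᶠ[𝓝 s] fun _ => 0 := by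
    filter_upwards [Iio_mem_nhds hs] with r hr
    exact GG_eq_zero hL (le_of_lt hr)
  rw [h.deriv_eq, deriv_const]

lemma deriv_GG_eq_zero_gt (hL : 2 < L) {s : ℝ} (hs : 1 + (L-2)/2 < s) :
    deriv (GG L γ) s = 0 := by
  have h : GG L γ =ᶠ[𝓝 s] fun _ => γ/2 := by
    filter_upwards [Ioi_mem_nhds hs] with r hr
    exact GG_eq_half hL (le_of_lt hr)
  rw [h.deriv_eq, deriv_const]


def MA : Mat2 := !![(1:ℝ), -1; 1, -1]
def MB : Mat2 := !![(1:ℝ), 1; -1, -1]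
def cc : Fin 2 → ℝ := ![1, -1]

def uu (L γ : ℝ) (x : Pt2) : Pt2 :=
  ![FF L γ (lm x) + GG L γ (lp x), FF L γ (lm x) - GG L γ (lp x)]

def DD (L γ : ℝ) (x : Pt2) : Mat2 :=
  deriv (FF L γ) (lm x) • MA + deriv (GG L γ) (lp x) • MB

/-- general "slip form" derivative computation -/
lemma hasFD_form {p q : ℝ → ℝ} (hp : Differentiable ℝ p) (hq : Differentiable ℝ q)
    (a b : ℝ) (x : Pt2) :
    HasFDerivAt (fun y : Pt2 => a * p (lm y) + b * q (lp y))
      ((a * deriv p (lm x)) • lm + (b * deriv q (lp x)) • lp) x := by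
  have h1 : HasFDerivAt (fun y : Pt2 => p (lm y)) (deriv p (lm x) • lm) x :=
    (hp (lm x)).hasDerivAt.comp_hasFDerivAt x lm.hasFDerivAt
  have h2 : HasFDerivAt (fun y : Pt2 => q (lp y)) (deriv q (lp x) • lp) x :=
    (hq (lp x)).hasDerivAt.comp_hasFDerivAt x lp.hasFDerivAt
  have := (h1.const_mul a).add (h2.const_mul b)
  simp only [smul_smul] at this
  exact this

lemma uu_comp (L γ : ℝ) (i : Fin 2) :
    (fun y => uu L γ y i) = fun y : Pt2 => 1 * FF L γ (lm y) + cc i * GG L γ (lp y) := by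
  funext y; fin_cases i <;> simp [uu, cc] <;> ring

lemma DD_comp (L γ : ℝ) (i j : Fin 2) :
    (fun y => DD L γ y i j)
      = fun y : Pt2 => MA i j * deriv (FF L γ) (lm y) + MB i j * deriv (GG L γ) (lp y) := by
  funext y
  simp [DD, Matrix.add_apply, Matrix.smul_apply, smul_eq_mul, mul_comm]

lemma diff_FF (L γ : ℝ) : Differentiable ℝ (FF L γ) :=
  (contDiff_FF L γ (n := 1)).differentiable (by simp)
lemma diff_GG (L γ : ℝ) : Differentiable ℝ (GG L γ) :=
  (contDiff_GG L γ (n := 1)).differentiable (by simp)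

lemma contDiff_dFF (L γ : ℝ) {n : ℕ∞} : ContDiff ℝ n (deriv (FF L γ)) :=
  ((contDiff_infty_iff_deriv.mp (contDiff_FF L γ (n := ⊤))).2).of_le (by exact_mod_cast le_top)
lemma contDiff_dGG (L γ : ℝ) {n : ℕ∞} : ContDiff ℝ n (deriv (GG L γ)) :=
  ((contDiff_infty_iff_deriv.mp (contDiff_GG L γ (n := ⊤))).2).of_le (by exact_mod_cast le_top)

lemma hasFD_uu (L γ : ℝ) (i : Fin 2) (x : Pt2) :
    HasFDerivAt (fun y => uu L γ y i)
      ((1 * deriv (FF L γ) (lm x)) • lm + (cc i * deriv (GG L γ) (lp x)) • lp) x := by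
  rw [uu_comp]
  exact hasFD_form (diff_FF L γ) (diff_GG L γ) 1 (cc i) x

lemma fderiv_uu (L γ : ℝ) (i j : Fin 2) (x : Pt2) :
    fderiv ℝ (fun y => uu L γ y i) x (Pi.single j 1) = DD L γ x i j := by
  rw [(hasFD_uu L γ i x).fderiv]
  fin_cases i <;> fin_cases j <;>
    simp [DD, MA, MB, cc, lm, lp, pr, Matrix.add_apply, Matrix.smul_apply, smul_eq_mul,
      Pi.single_apply] <;> ring

lemma diff_uu (L γ : ℝ) (i : Fin 2) : Differentiable ℝ (fun y => uu L γ y i) :=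
  fun x => (hasFD_uu L γ i x).differentiableAt


variable {L γ : ℝ}

lemma cont_DD (L γ : ℝ) (i j : Fin 2) : Continuous fun x => DD L γ x i j := by
  rw [DD_comp]
  exact (continuous_const.mul ((contDiff_dFF L γ (n := 1)).continuous.comp lm.continuous)).add
    (continuous_const.mul ((contDiff_dGG L γ (n := 1)).continuous.comp lp.continuous))

lemma cont_ddFF (L γ : ℝ) : Continuous (deriv (deriv (FF L γ))) :=
  ((contDiff_infty_iff_deriv.mp (contDiff_dFF L γ (n := ⊤))).2).continuous
lemma cont_ddGG (L γ : ℝ) : Continuous (deriv (deriv (GG L γ))) :=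
  ((contDiff_infty_iff_deriv.mp (contDiff_dGG L γ (n := ⊤))).2).continuous

lemma test_zero {f : Pt2 → ℝ} (hf : IsTest L f) {x : Pt2} (hx : x ∉ Omega L) : f x = 0 :=
  image_eq_zero_of_notMem_tsupport fun h => hx (hf.2.2 h)

lemma test_pd_zero {f : Pt2 → ℝ} (hf : IsTest L f) {x : Pt2} (hx : x ∉ Omega L) (j : Fin 2) :
    pd j f x = 0 := by
  have h0 : fderiv ℝ f x = 0 := by
    by_contra h
    exact hx (hf.2.2 (support_fderiv_subset ℝ (Function.mem_support.mpr h)))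
  simp [pd, h0]

lemma cont_uu_comp (L γ : ℝ) (i : Fin 2) : Continuous fun y => uu L γ y i :=
  (diff_uu L γ i).continuous

/-- Integration by parts on ℝ². -/
lemma ibp {U f : Pt2 → ℝ} {v : Pt2} (hU : Differentiable ℝ U) (hUc : Continuous U)
    (hU' : Continuous fun x => fderiv ℝ U x v)
    (hf : ContDiff ℝ 1 f) (hsupp : HasCompactSupport f) :
    ∫ x, U x * fderiv ℝ f x v = - ∫ x, fderiv ℝ U x v * f x := by
  have hfc : Continuous f := hf.continuous
  have hfd : Continuous fun x => fderiv ℝ f x v :=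
    (hf.continuous_fderiv one_ne_zero).clm_apply continuous_const
  apply integral_mul_fderiv_eq_neg_fderiv_mul_of_integrable
  · exact (hU'.mul hfc).integrable_of_hasCompactSupport hsupp.mul_left
  · exact (hUc.mul hfd).integrable_of_hasCompactSupport (hsupp.fderiv_apply ℝ (v := v)).mul_left
  · exact (hUc.mul hfc).integrable_of_hasCompactSupport hsupp.mul_left
  · exact fun x _ => hU x
  · exact fun x _ => hf.differentiable one_ne_zero x

lemma weakgrad (L γ : ℝ) : IsWeakGradient L (uu L γ) (DD L γ) := by
  intro f hf i j
  have h1 : ∀ x ∉ Omega L, uu L γ x i * pd j f x = 0 := fun x hx => by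
    rw [test_pd_zero hf hx j, mul_zero]
  have h2 : ∀ x ∉ Omega L, DD L γ x i j * f x = 0 := fun x hx => by
    rw [test_zero hf hx, mul_zero]
  rw [setIntegral_eq_integral_of_forall_compl_eq_zero h1,
      setIntegral_eq_integral_of_forall_compl_eq_zero h2]
  have hDD : (fun x => DD L γ x i j)
      = fun x => fderiv ℝ (fun y => uu L γ y i) x (Pi.single j 1) :=
    funext fun x => (fderiv_uu L γ i j x).symm
  have hU' : Continuous fun x => fderiv ℝ (fun y => uu L γ y i) x (Pi.single j 1) := by
    have h := cont_DD L γ i j; rwa [hDD] at h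
  simp only [pd]
  rw [ibp (diff_uu L γ i) (cont_uu_comp L γ i) hU' hf.1 hf.2.1, neg_inj]
  exact integral_congr_ae (ae_of_all _ fun x => by beta_reduce; rw [fderiv_uu])

lemma hasFD_DD (L γ : ℝ) (i j : Fin 2) (x : Pt2) :
    HasFDerivAt (fun y => DD L γ y i j)
      ((MA i j * deriv (deriv (FF L γ)) (lm x)) • lm
        + (MB i j * deriv (deriv (GG L γ)) (lp x)) • lp) x := by
  rw [DD_comp]
  exact hasFD_form ((contDiff_dFF L γ (n := 1)).differentiable (by simp))
    ((contDiff_dGG L γ (n := 1)).differentiable (by simp)) (MA i j) (MB i j) x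

lemma diff_DD (L γ : ℝ) (i j : Fin 2) : Differentiable ℝ fun y => DD L γ y i j :=
  fun x => (hasFD_DD L γ i j x).differentiableAt

lemma fderiv_DD (L γ : ℝ) (i j k : Fin 2) (x : Pt2) :
    fderiv ℝ (fun y => DD L γ y i j) x (Pi.single k 1)
      = MA i j * deriv (deriv (FF L γ)) (lm x) * (if k = 0 then 1 else -1)
        + MB i j * deriv (deriv (GG L γ)) (lp x) := by
  rw [(hasFD_DD L γ i j x).fderiv]
  fin_cases k <;>
    simp [lm, lp, pr, Pi.single_apply] <;> ring

lemma cont_fderiv_DD (L γ : ℝ) (i j k : Fin 2) :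
    Continuous fun x => fderiv ℝ (fun y => DD L γ y i j) x (Pi.single k 1) := by
  have : (fun x => fderiv ℝ (fun y => DD L γ y i j) x (Pi.single k 1))
      = fun x => MA i j * deriv (deriv (FF L γ)) (lm x) * (if k = 0 then 1 else -1)
        + MB i j * deriv (deriv (GG L γ)) (lp x) := funext fun x => fderiv_DD L γ i j k x
  rw [this]
  exact ((continuous_const.mul ((cont_ddFF L γ).comp lm.continuous)).mul continuous_const).add
    (continuous_const.mul ((cont_ddGG L γ).comp lp.continuous))

lemma curl_zero (L γ : ℝ) {φ : Pt2 → ℝ} (hφ : IsTest L φ) (i : Fin 2) :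
    ∫ x in Omega L, (DD L γ x i 1 * pd 0 φ x - DD L γ x i 0 * pd 1 φ x) = 0 := by
  have h1 : ∀ x ∉ Omega L, (DD L γ x i 1 * pd 0 φ x - DD L γ x i 0 * pd 1 φ x) = 0 :=
    fun x hx => by rw [test_pd_zero hφ hx 0, test_pd_zero hφ hx 1, mul_zero, mul_zero, sub_zero]
  rw [setIntegral_eq_integral_of_forall_compl_eq_zero h1]
  have hpd : ∀ k : Fin 2, Continuous fun x => pd k φ x := by
    intro k
    simp only [pd]
    exact (hφ.1.continuous_fderiv one_ne_zero).clm_apply continuous_const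
  have hpds : ∀ k : Fin 2, HasCompactSupport fun x => pd k φ x := fun k =>
    hφ.2.1.fderiv_apply ℝ (v := Pi.single k 1)
  have hint1 : Integrable fun x => DD L γ x i 1 * pd 0 φ x :=
    ((cont_DD L γ i 1).mul (hpd 0)).integrable_of_hasCompactSupport (hpds 0).mul_left
  have hint2 : Integrable fun x => DD L γ x i 0 * pd 1 φ x :=
    ((cont_DD L γ i 0).mul (hpd 1)).integrable_of_hasCompactSupport (hpds 1).mul_left
  rw [integral_sub hint1 hint2]
  have e1 : ∫ x, DD L γ x i 1 * pd 0 φ x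
      = - ∫ x, fderiv ℝ (fun y => DD L γ y i 1) x (Pi.single 0 1) * φ x := by
    simp only [pd]
    exact ibp (diff_DD L γ i 1) (cont_DD L γ i 1) (cont_fderiv_DD L γ i 1 0) hφ.1 hφ.2.1
  have e2 : ∫ x, DD L γ x i 0 * pd 1 φ x
      = - ∫ x, fderiv ℝ (fun y => DD L γ y i 0) x (Pi.single 1 1) * φ x := by
    simp only [pd]
    exact ibp (diff_DD L γ i 0) (cont_DD L γ i 0) (cont_fderiv_DD L γ i 0 1) hφ.1 hφ.2.1
  have key : ∀ x, fderiv ℝ (fun y => DD L γ y i 1) x (Pi.single 0 1)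
      = fderiv ℝ (fun y => DD L γ y i 0) x (Pi.single 1 1) := by
    intro x
    rw [fderiv_DD, fderiv_DD]
    fin_cases i <;> simp [MA, MB] <;> ring
  have e3 : ∫ x, fderiv ℝ (fun y => DD L γ y i 1) x (Pi.single 0 1) * φ x
      = ∫ x, fderiv ℝ (fun y => DD L γ y i 0) x (Pi.single 1 1) * φ x :=
    integral_congr_ae (ae_of_all _ fun x => by beta_reduce; rw [key x])
  rw [e1, e2, e3, sub_self]

lemma tvcurl_zero (L γ : ℝ) : TVcurl L (DD L γ) = 0 := by
  apply le_antisymm _ zero_le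
  apply sSup_le
  rintro t ⟨φ, hφ, -, rfl⟩
  have h : ∑ i, ∫ x in Omega L,
      (DD L γ x i 1 * pd 0 (φ i) x - DD L γ x i 0 * pd 1 (φ i) x) = 0 :=
    Finset.sum_eq_zero fun i _ => curl_zero L γ (hφ i) i
  simp [h]

lemma isOpen_Omega (L : ℝ) : IsOpen (Omega L) := by
  have : Omega L = ((fun x : Pt2 => x 0) ⁻¹' Ioo 0 1) ∩ ((fun x : Pt2 => x 1) ⁻¹' Ioo 0 L) := rfl
  rw [this]
  exact (isOpen_Ioo.preimage (continuous_apply 0)).inter (isOpen_Ioo.preimage (continuous_apply 1))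

def Kset (L : ℝ) : Set Pt2 := Set.pi univ fun _ : Fin 2 => Icc (0:ℝ) (max 1 L)

lemma omega_subset_K (L : ℝ) : Omega L ⊆ Kset L := fun x hx => by
  refine Set.mem_univ_pi.mpr fun i => ?_
  fin_cases i
  · exact ⟨hx.1.1.le, hx.1.2.le.trans (le_max_left _ _)⟩
  · exact ⟨hx.2.1.le, hx.2.2.le.trans (le_max_right _ _)⟩

lemma K_compact (L : ℝ) : IsCompact (Kset L) := isCompact_univ_pi fun _ => isCompact_Icc

lemma finiteOmega (L : ℝ) : IsFiniteMeasure (volume.restrict (Omega L)) := by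
  constructor
  rw [Measure.restrict_apply_univ]
  exact lt_of_le_of_lt (measure_mono (omega_subset_K L)) (K_compact L).measure_lt_top

lemma memlp (L γ : ℝ) (i j : Fin 2) :
    MemLp (fun x => DD L γ x i j) 2 (volume.restrict (Omega L)) := by
  haveI := finiteOmega L
  obtain ⟨C, hC⟩ := (K_compact L).exists_bound_of_continuousOn (cont_DD L γ i j).continuousOn
  refine MemLp.of_bound (cont_DD L γ i j).aestronglyMeasurable C ?_
  filter_upwards [ae_restrict_mem (isOpen_Omega L).measurableSet] with x hx
  exact hC x (omega_subset_K L hx)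

lemma singleslip (hL : 2 < L) (γ : ℝ) : SingleSlip L (DD L γ) := by
  filter_upwards [ae_restrict_mem (isOpen_Omega L).measurableSet] with x hx
  rcases lt_or_ge (lp x) 1 with h | h
  · exact ⟨deriv (FF L γ) (lm x), Or.inl (by simp only [DD, deriv_GG_eq_zero_lt hL h, zero_smul, add_zero]; rfl)⟩
  rcases le_or_gt (lp x) (1 + (L-2)/2) with h2 | h2
  · have hlm : -1 - (L-2)/2 < lm x := by
      have h0 : 0 < x 0 := hx.1.1
      simp only [lm_apply, lp_apply] at h2 ⊢
      linarith
    exact ⟨deriv (GG L γ) (lp x), Or.inr (by simp only [DD, deriv_FF_eq_zero hL hlm, zero_smul, zero_add]; rfl)⟩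
  · exact ⟨deriv (FF L γ) (lm x), Or.inl (by simp only [DD, deriv_GG_eq_zero_gt hL h2, zero_smul, add_zero]; rfl)⟩

lemma closure_subset (L : ℝ) :
    closure (Omega L) ⊆ {x : Pt2 | x 0 ∈ Icc (0:ℝ) 1 ∧ x 1 ∈ Icc (0:ℝ) L} := by
  apply closure_minimal
  · exact fun x hx => ⟨⟨hx.1.1.le, hx.1.2.le⟩, ⟨hx.2.1.le, hx.2.2.le⟩⟩
  · have : {x : Pt2 | x 0 ∈ Icc (0:ℝ) 1 ∧ x 1 ∈ Icc (0:ℝ) L}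
        = ((fun x : Pt2 => x 0) ⁻¹' Icc 0 1) ∩ ((fun x : Pt2 => x 1) ⁻¹' Icc 0 L) := rfl
    rw [this]
    exact (isClosed_Icc.preimage (continuous_apply 0)).inter
      (isClosed_Icc.preimage (continuous_apply 1))

lemma bc (hL : 2 < L) (γ : ℝ) : BCv L γ ![1, 0] (uu L γ) := by
  have hε := eps_pos (L := L) hL
  constructor
  · intro x hx h0
    obtain ⟨⟨h00, h01⟩, -⟩ := closure_subset L hx
    have e1 : FF L γ (x 0 - x 1) = 0 := by
      apply FF_eq_zero hL
      rw [h0]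
      linarith
    have e2 : GG L γ (x 0 + x 1) = 0 := by
      apply GG_eq_zero hL
      rw [h0]
      linarith
    funext i
    fin_cases i <;> simp [uu, e1, e2]
  · intro x hx h0
    obtain ⟨⟨h00, h01⟩, -⟩ := closure_subset L hx
    have e1 : FF L γ (x 0 - x 1) = γ/2 := by
      apply FF_eq_half hL
      rw [h0]
      linarith
    have e2 : GG L γ (x 0 + x 1) = γ/2 := by
      apply GG_eq_half hL
      rw [h0]
      linarith
    funext i
    fin_cases i <;>
      simp [uu, e1, e2, Pi.smul_apply, smul_eq_mul] <;> ring_nf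

lemma energy_zero (L σ γ : ℝ) : Energy L σ (DD L γ) (DD L γ) = 0 := by
  rw [Energy, tvcurl_zero, mul_zero, add_zero]
  have h1 : normSq (symPart (0 : Mat2)) = 0 := by
    simp [symPart, normSq]
  simp [h1]

lemma admissible (hL : 2 < L) (γ : ℝ) : IsAdmissible L (uu L γ) (DD L γ) (DD L γ) := by
  refine ⟨?_, weakgrad L γ, memlp L γ, ?_, singleslip hL γ⟩
  · exact (continuous_pi fun i => cont_uu_comp L γ i).continuousOn
  · exact fun i j => ((cont_DD L γ i j).locallyIntegrable (μ := volume)).locallyIntegrableOn _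

end BC2

/-- Under BC2 (horizontal shear), L > 2 implies J_L = 0; in fact there is
an admissible pair satisfying BC2 with zero energy. -/
theorem J_eq_zero_of_two_lt_BC2 (L σ γ : ℝ) (hσ : 0 < σ) (hγ : 0 < γ) (hL : 2 < L) :
    J L σ γ ![1, 0] = 0 ∧
    ∃ u Du β, IsAdmissible L u Du β ∧ BCv L γ ![1, 0] u ∧ TVcurl L β ≠ ⊤ ∧
      Energy L σ Du β = 0 := by
  have hadm := BC2.admissible hL γ
  have hbc := BC2.bc hL (γ := γ)
  have htv : TVcurl L (BC2.DD L γ) ≠ ⊤ := by rw [BC2.tvcurl_zero]; exact ENNReal.zero_ne_top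
  have hen := BC2.energy_zero L σ γ
  constructor
  · apply le_antisymm _ zero_le
    apply sInf_le
    exact ⟨BC2.uu L γ, BC2.DD L γ, BC2.DD L γ, hadm, hbc, htv, hen.symm⟩
  · exact ⟨BC2.uu L γ, BC2.DD L γ, BC2.DD L γ, hadm, hbc, htv, hen⟩

end
end
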